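/- Let C ⊆ F_q^n be a linear code of dimension k with the Hamming metric. Then α_i(C) ≤ n - i + 1 for all 1 ≤ i ≤ n. Moreover: for 1 ≤ i ≤ k-1, equality holds if and only if C contains an i-dimensional MDS code; α_k(C) = n - k + 1 if and only if C is MDS; and for k+1 ≤ i ≤ n, equality holds if and only if C is contained in an i-dimensional MDS code. -/

import Mathlib

open Module

/-- Hamming weight of a vector. -/
noncomputable def hwt {ι α : Type*} [Zero α] (x : ι → α) : ℕ := {i | x i ≠ 0}.ncard

/-- Minimum distance (minimum weight of a nonzero element) of a code `D`. -/
noncomputable def dminN {𝔽 V : Type*} [Field 𝔽] [AddCommGroup V] [Module 𝔽 V]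
    (wt : V → ℕ) (D : Submodule 𝔽 V) : ℕ :=
  sInf (wt '' {v : V | v ∈ D ∧ v ≠ 0})

/-- The `i`-th code distance of a code `C`: for `i ≤ dim C` the largest minimum distance of
an `i`-dimensional subcode of `C`, and for `i ≥ dim C` the largest minimum distance of an
`i`-dimensional supercode of `C` (both notions agree at `i = dim C`). -/
noncomputable def alphaN {𝔽 V : Type*} [Field 𝔽] [AddCommGroup V] [Module 𝔽 V]
    (wt : V → ℕ) (C : Submodule 𝔽 V) (i : ℕ) : ℕ :=
  if i ≤ finrank 𝔽 C then
    sSup (dminN wt '' {D : Submodule 𝔽 V | D ≤ C ∧ finrank 𝔽 D = i})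
  else
    sSup (dminN wt '' {D : Submodule 𝔽 V | C ≤ D ∧ finrank 𝔽 D = i})

lemma singleton_bound {𝔽 : Type*} [Field 𝔽] {n i : ℕ}
    (D : Submodule 𝔽 (Fin n → 𝔽)) (hD : finrank 𝔽 D = i) (h1 : 1 ≤ i) :
    dminN hwt D ≤ n - i + 1 := by
  have hin : i ≤ n := by
    rw [← hD]
    simpa using Submodule.finrank_le D
  obtain ⟨S, -, hScard⟩ := Finset.exists_subset_card_eq (s := (Finset.univ : Finset (Fin n))) (n := i - 1)
    (by simpa using Nat.sub_le_of_le_add (by omega) : i - 1 ≤ Finset.univ.card)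
  set f : (Fin n → 𝔽) →ₗ[𝔽] (S → 𝔽) := LinearMap.funLeft 𝔽 𝔽 ((↑) : S → Fin n)
  set g : D →ₗ[𝔽] (S → 𝔽) := f.comp D.subtype
  have hrank : finrank 𝔽 (LinearMap.range g) + finrank 𝔽 (LinearMap.ker g) = i := by
    rw [LinearMap.finrank_range_add_finrank_ker, hD]
  have hrle : finrank 𝔽 (LinearMap.range g) ≤ i - 1 := by
    have := Submodule.finrank_le (LinearMap.range g)
    rwa [Module.finrank_pi, Fintype.card_coe, hScard] at this
  have hker : 0 < finrank 𝔽 (LinearMap.ker g) := by omega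
  replace hker : Nontrivial (LinearMap.ker g) := Module.finrank_pos_iff.mp hker
  obtain ⟨⟨v, hvk⟩, hvne⟩ := exists_ne (0 : LinearMap.ker g)
  have hvD : (v : Fin n → 𝔽) ∈ D := v.2
  have hv0 : (v : Fin n → 𝔽) ≠ 0 := fun h => hvne (Subtype.ext (Subtype.ext h))
  have hS0 : ∀ s ∈ S, (v : Fin n → 𝔽) s = 0 := by
    intro s hs
    have := congrFun hvk ⟨s, hs⟩
    simpa [g, f, LinearMap.funLeft] using this
  have hwtle : hwt (v : Fin n → 𝔽) ≤ n - i + 1 := by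
    have hsub : {j | (v : Fin n → 𝔽) j ≠ 0} ⊆ (↑(Sᶜ) : Set (Fin n)) := by
      intro j hj
      simp only [Finset.coe_compl, Set.mem_compl_iff, Finset.mem_coe]
      intro hjS
      exact hj (hS0 j hjS)
    calc hwt (v : Fin n → 𝔽) ≤ (↑(Sᶜ) : Set (Fin n)).ncard :=
          Set.ncard_le_ncard hsub (Set.toFinite _)
      _ = (Sᶜ).card := Set.ncard_coe_finset _
      _ = n - (i - 1) := by rw [Finset.card_compl, hScard]; simp
      _ ≤ n - i + 1 := by omega
  exact le_trans (Nat.sInf_le ⟨v, ⟨hvD, hv0⟩, rfl⟩) hwtle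

lemma sSup_key {𝔽 : Type*} [Field 𝔽] {n i : ℕ}
    (P : Set (Submodule 𝔽 (Fin n → 𝔽))) (hP : ∀ D ∈ P, finrank 𝔽 D = i)
    (h1 : 1 ≤ i) (hn : i ≤ n) :
    sSup (dminN hwt '' P) = n - i + 1 ↔ ∃ D ∈ P, dminN hwt D = n - i + 1 := by
  have ub : (n - i + 1) ∈ upperBounds (dminN hwt '' P) := by
    rintro x ⟨D, hD, rfl⟩
    exact singleton_bound D (hP D hD) h1
  have bdd : BddAbove (dminN hwt '' P) := ⟨_, ub⟩
  constructor
  · intro h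
    have hne : (dminN hwt '' P).Nonempty := by
      by_contra hempty
      rw [Set.not_nonempty_iff_eq_empty] at hempty
      rw [hempty, csSup_empty, Nat.bot_eq_zero] at h
      omega
    have := Nat.sSup_mem hne bdd
    rw [h] at this
    obtain ⟨D, hD, hDd⟩ := this
    exact ⟨D, hD, hDd⟩
  · rintro ⟨D, hD, hd⟩
    exact le_antisymm (csSup_le' ub) (hd ▸ le_csSup bdd ⟨D, hD, rfl⟩)

/-- Singleton-type bound for code distances of a `k`-dimensional code `C ⊆ 𝔽_q^n` with the
Hamming metric: `α_i(C) ≤ n - i + 1`, with equality for `i ≤ k-1` iff `C` contains an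
`i`-dimensional MDS code, for `i = k` iff `C` is MDS, and for `i ≥ k+1` iff `C` is contained
in an `i`-dimensional MDS code. -/
theorem alpha_le_singleton_and_MDS_characterization
    {𝔽 : Type*} [Field 𝔽] [Fintype 𝔽] {n k : ℕ}
    (C : Submodule 𝔽 (Fin n → 𝔽)) (hk : finrank 𝔽 C = k) :
    (∀ i, 1 ≤ i → i ≤ n → alphaN hwt C i ≤ n - i + 1) ∧
    (∀ i, 1 ≤ i → i ≤ k - 1 →
      (alphaN hwt C i = n - i + 1 ↔
        ∃ D : Submodule 𝔽 (Fin n → 𝔽), D ≤ C ∧ finrank 𝔽 D = i ∧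
          dminN hwt D = n - i + 1)) ∧
    (alphaN hwt C k = n - k + 1 ↔ dminN hwt C = n - k + 1) ∧
    (∀ i, k + 1 ≤ i → i ≤ n →
      (alphaN hwt C i = n - i + 1 ↔
        ∃ D : Submodule 𝔽 (Fin n → 𝔽), C ≤ D ∧ finrank 𝔽 D = i ∧
          dminN hwt D = n - i + 1)) := by
  have hkn : k ≤ n := by
    rw [← hk]
    simpa using Submodule.finrank_le C
  refine ⟨?_, ?_, ?_, ?_⟩
  · intro i h1 hn
    rw [alphaN]
    split <;>
    · apply csSup_le'
      rintro x ⟨D, ⟨-, hD⟩, rfl⟩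
      exact singleton_bound D hD h1
  · intro i h1 hi
    rw [alphaN, if_pos (by omega : i ≤ finrank 𝔽 C)]
    rw [sSup_key _ (fun D hD => hD.2) h1 (by omega)]
    constructor
    · rintro ⟨D, ⟨ha, hb⟩, hc⟩; exact ⟨D, ha, hb, hc⟩
    · rintro ⟨D, ha, hb, hc⟩; exact ⟨D, ⟨ha, hb⟩, hc⟩
  · rcases Nat.eq_zero_or_pos k with hk0 | hk1
    · subst hk0
      have hC : C = ⊥ := Submodule.finrank_eq_zero.mp hk
      subst hC
      have hdm : dminN hwt (⊥ : Submodule 𝔽 (Fin n → 𝔽)) = 0 := by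
        have hE : {v : Fin n → 𝔽 | v ∈ (⊥ : Submodule 𝔽 (Fin n → 𝔽)) ∧ v ≠ 0} = ∅ := by
          ext v; simp [Submodule.mem_bot]
        rw [dminN, hE, Set.image_empty, Nat.sInf_empty]
      have hset : {D : Submodule 𝔽 (Fin n → 𝔽) | D ≤ ⊥ ∧ finrank 𝔽 D = 0} = {⊥} := by
        ext D
        simp only [Set.mem_setOf_eq, le_bot_iff, Set.mem_singleton_iff]
        constructor
        · rintro ⟨h, -⟩; exact h
        · rintro rfl; exact ⟨rfl, finrank_bot 𝔽 _⟩
      have hα : alphaN hwt (⊥ : Submodule 𝔽 (Fin n → 𝔽)) 0 = 0 := by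
        rw [alphaN, if_pos (Nat.zero_le _), hset, Set.image_singleton, hdm, csSup_singleton]
      rw [hα, hdm]
    · rw [alphaN, if_pos (le_of_eq hk.symm)]
      rw [sSup_key _ (fun D hD => hD.2) hk1 hkn]
      constructor
      · rintro ⟨D, ⟨hle, hfr⟩, hd⟩
        have : D = C := Submodule.eq_of_le_of_finrank_eq hle (by rw [hfr, hk])
        rwa [this] at hd
      · intro h
        exact ⟨C, ⟨le_refl C, hk⟩, h⟩
  · intro i h1 hi
    rw [alphaN, if_neg (by omega : ¬ i ≤ finrank 𝔽 C)]
    rw [sSup_key _ (fun D hD => hD.2) (by omega) hi]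
    constructor
    · rintro ⟨D, ⟨ha, hb⟩, hc⟩; exact ⟨D, ha, hb, hc⟩
    · rintro ⟨D, ha, hb, hc⟩; exact ⟨D, ⟨ha, hb⟩, hc⟩
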